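/- The supremum functional σ(f) = sup_{x∈X} f(x) on ℓ^∞(X), for X an arbitrary nonempty set, is Hadamard directionally differentiable at every f ∈ ℓ^∞(X), with derivative σ'_f(g) = lim_{ε↓0} sup_{A_ε(f)} g, where A_ε(f) = {x ∈ X : f(x) ≥ sup_X f − ε}. -/

import Mathlib

open Filter Topology

/-- The supremum functional on `ℓ^∞(X)` is Hadamard directionally differentiable at every
bounded `f`, with derivative `σ'_f(g) = lim_{ε↓0} sup_{A_ε(f)} g`. -/
theorem stmt_0 {X : Type*} [Nonempty X] (f : X → ℝ) (hf : ∃ C, ∀ x, |f x| ≤ C)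
    (g : X → ℝ) (hg : ∃ C, ∀ x, |g x| ≤ C) :
    ∃ L : ℝ,
      Tendsto (fun ε : ℝ => sSup (g '' {x | (⨆ y, f y) - ε ≤ f x}))
        (nhdsWithin 0 (Set.Ioi 0)) (𝓝 L) ∧
      ∀ (t : ℕ → ℝ) (h : ℕ → X → ℝ),
        Antitone t → (∀ n, 0 < t n) → Tendsto t atTop (𝓝 0) →
        (∀ n, ∃ C, ∀ x, |h n x| ≤ C) →
        TendstoUniformly h g atTop →
        Tendsto (fun n => ((⨆ x, (f x + t n * h n x)) - ⨆ x, f x) / t n) atTop (𝓝 L) := by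
  classical
  obtain ⟨Cf, hCf⟩ := hf
  obtain ⟨Cg, hCg⟩ := hg
  have hCg0 : 0 ≤ Cg := le_trans (abs_nonneg _) (hCg Classical.ofNonempty)
  set M : ℝ := ⨆ y, f y with hM
  have hfbdd : BddAbove (Set.range f) := ⟨Cf, by rintro _ ⟨x, rfl⟩; exact (abs_le.1 (hCf x)).2⟩
  set S : ℝ → ℝ := fun ε => sSup (g '' {x | M - ε ≤ f x}) with hSdef
  have hgbdd : ∀ s : Set X, BddAbove (g '' s) := by
    intro s
    exact ⟨Cg, by rintro _ ⟨x, hx, rfl⟩; exact (abs_le.1 (hCg x)).2⟩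
  have hA : ∀ ε : ℝ, 0 < ε → ∃ x, M - ε ≤ f x := by
    intro ε hε
    obtain ⟨x, hx⟩ := exists_lt_of_lt_ciSup (show M - ε < M by linarith)
    exact ⟨x, hx.le⟩
  have hS_le : ∀ ε : ℝ, 0 < ε → S ε ≤ Cg := by
    intro ε hε
    obtain ⟨x, hx⟩ := hA ε hε
    exact csSup_le ⟨g x, Set.mem_image_of_mem _ hx⟩
      (by rintro _ ⟨y, hy, rfl⟩; exact (abs_le.1 (hCg y)).2)
  have hS_ge : ∀ ε : ℝ, 0 < ε → -Cg ≤ S ε := by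
    intro ε hε
    obtain ⟨x, hx⟩ := hA ε hε
    exact le_trans (abs_le.1 (hCg x)).1 (le_csSup (hgbdd _) ⟨x, hx, rfl⟩)
  have hSmono : MonotoneOn S (Set.Ioi (0 : ℝ)) := by
    intro a ha b _ hab
    obtain ⟨x, hx⟩ := hA a ha
    refine csSup_le_csSup (hgbdd _) ⟨g x, Set.mem_image_of_mem _ hx⟩ ?_
    exact Set.image_mono (fun y hy => by simp only [Set.mem_setOf_eq] at hy ⊢; linarith)
  have hbdd : BddBelow (S '' Set.Ioi (0 : ℝ)) :=
    ⟨-Cg, by rintro _ ⟨ε, hε, rfl⟩; exact hS_ge ε hε⟩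
  set L : ℝ := sInf (S '' Set.Ioi (0 : ℝ)) with hLdef
  have hL_le : ∀ ε : ℝ, 0 < ε → L ≤ S ε := fun ε hε =>
    csInf_le hbdd (Set.mem_image_of_mem _ hε)
  have hL_near : ∀ ε : ℝ, 0 < ε → ∃ δ > 0, S δ < L + ε := by
    intro ε hε
    obtain ⟨_, ⟨δ, hδ, rfl⟩, hlt⟩ := exists_lt_of_csInf_lt
      (Set.Nonempty.image _ ⟨1, by norm_num⟩) (show L < L + ε by linarith)
    exact ⟨δ, hδ, hlt⟩
  refine ⟨L, hSmono.tendsto_nhdsGT hbdd, ?_⟩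
  intro t h ht htpos ht0 hhb hu
  rw [Metric.tendstoUniformly_iff] at hu
  have hsupbdd : ∀ n, BddAbove (Set.range fun x => f x + t n * h n x) := by
    intro n
    obtain ⟨Cn, hCn⟩ := hhb n
    refine ⟨Cf + t n * Cn, ?_⟩
    rintro _ ⟨x, rfl⟩
    show f x + t n * h n x ≤ Cf + t n * Cn
    have := mul_le_mul_of_nonneg_left (abs_le.1 (hCn x)).2 (htpos n).le
    have := (abs_le.1 (hCf x)).2
    linarith
  rw [tendsto_order]
  constructor
  · -- lower bound
    intro l hl
    set ε : ℝ := L - l with hε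
    have hεpos : 0 < ε := by rw [hε]; linarith
    filter_upwards [hu (ε / 4) (by linarith)] with n hn
    have htn := htpos n
    set δ : ℝ := t n * (ε / 4) with hδ
    have hδpos : 0 < δ := by positivity
    have key : ∀ x, M - δ ≤ f x →
        g x ≤ ((⨆ x, (f x + t n * h n x)) - M) / t n + ε / 2 := by
      intro x hx
      have h1 : f x + t n * h n x ≤ ⨆ x, (f x + t n * h n x) :=
        le_ciSup (hsupbdd n) x
      have h2 : |g x - h n x| < ε / 4 := by
        have := hn x; rwa [Real.dist_eq] at this
      have h3 : g x - ε / 4 ≤ h n x := by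
        have := (abs_lt.1 h2).2; linarith
      have h4 : t n * (g x - ε / 4) ≤ t n * h n x :=
        mul_le_mul_of_nonneg_left h3 htn.le
      have h5 : M - δ + t n * (g x - ε / 4) ≤ ⨆ x, (f x + t n * h n x) := by
        calc M - δ + t n * (g x - ε / 4) ≤ f x + t n * h n x := by linarith
        _ ≤ _ := h1
      rw [← sub_le_iff_le_add, le_div_iff₀ htn]
      calc (g x - ε / 2) * t n = t n * (g x - ε / 4) - t n * (ε / 4) := by ring
      _ ≤ (⨆ x, (f x + t n * h n x)) - M := by rw [hδ] at h5; linarith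
    have hSδ : S δ ≤ ((⨆ x, (f x + t n * h n x)) - M) / t n + ε / 2 := by
      obtain ⟨x, hx⟩ := hA δ hδpos
      exact csSup_le ⟨g x, Set.mem_image_of_mem _ hx⟩ (by rintro _ ⟨y, hy, rfl⟩; exact key y hy)
    have := hL_le δ hδpos
    have : l < ((⨆ x, (f x + t n * h n x)) - M) / t n := by
      have : L - ε / 2 ≤ ((⨆ x, (f x + t n * h n x)) - M) / t n := by linarith
      linarith [hεpos]
    simpa using this
  · -- upper bound
    intro u hu'
    set ε : ℝ := u - L with hε
    have hεpos : 0 < ε := by rw [hε]; linarith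
    obtain ⟨δ, hδpos, hSδ⟩ := hL_near (ε / 2) (by linarith)
    have hc : (0 : ℝ) < δ / (2 * Cg + 1) := by positivity
    filter_upwards [hu (ε / 4) (by linarith), ht0.eventually (gt_mem_nhds hc)] with n hn htn'
    have htn := htpos n
    have htnδ : t n * (2 * Cg + 1) < δ := by
      rw [← lt_div_iff₀ (by positivity)]; exact htn'
    have key : ∀ x, f x + t n * h n x ≤ M + t n * (S δ + ε / 4) := by
      intro x
      have h2 : |g x - h n x| < ε / 4 := by
        have := hn x; rwa [Real.dist_eq] at this
      have h3 : h n x ≤ g x + ε / 4 := by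
        have := (abs_lt.1 h2).1; linarith
      by_cases hx : M - δ ≤ f x
      · have hgx : g x ≤ S δ := le_csSup (hgbdd _) (Set.mem_image_of_mem _ hx)
        have hfx : f x ≤ M := le_ciSup hfbdd x
        have : t n * h n x ≤ t n * (S δ + ε / 4) :=
          mul_le_mul_of_nonneg_left (by linarith) htn.le
        linarith
      · push_neg at hx
        have hgx : g x ≤ Cg := (abs_le.1 (hCg x)).2
        have hSδge : -Cg ≤ S δ := hS_ge δ hδpos
        have h4 : h n x ≤ Cg + ε / 4 := by linarith
        have h5 : t n * h n x ≤ t n * (Cg + ε / 4) :=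
          mul_le_mul_of_nonneg_left h4 htn.le
        have h6 : t n * (Cg + ε / 4) - t n * (S δ + ε / 4) ≤ t n * (2 * Cg + 1) := by
          have : t n * (Cg + ε / 4) - t n * (S δ + ε / 4) = t n * (Cg - S δ) := by ring
          rw [this]
          exact mul_le_mul_of_nonneg_left (by linarith) htn.le
        linarith
    have hsup : (⨆ x, (f x + t n * h n x)) ≤ M + t n * (S δ + ε / 4) :=
      ciSup_le key
    have : ((⨆ x, (f x + t n * h n x)) - M) / t n ≤ S δ + ε / 4 := by
      rw [div_le_iff₀ htn]; linarith [hsup]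
    have : ((⨆ x, (f x + t n * h n x)) - M) / t n < u := by
      have : S δ + ε / 4 < L + ε := by linarith
      linarith
    simpa using this
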